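/- A ring R is von Neumann regular if and only if every right R-module is absolutely pure (i.e., FP-injective, meaning Ext^1(F, M) = 0 for every finitely presented module F). -/

import Mathlib

/-- A module `M` over a ring `A` is *absolutely pure* (FP-injective) if every linear map
into `M` from a submodule `L` of a module `N` with `N ⧸ L` finitely presented extends to `N`
(equivalently, `Ext¹(F, M) = 0` for every finitely presented `F`). -/
def FPInjective (A : Type) [Ring A] (M : Type) [AddCommGroup M] [Module A M] : Prop :=
  ∀ (N : Type) [AddCommGroup N] [Module A N] (L : Submodule A N),
    Module.FinitePresentation A (N ⧸ L) →
      ∀ f : L →ₗ[A] M, ∃ g : N →ₗ[A] M, ∀ x : L, g x = f x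

variable {A : Type} [Ring A]

/-- Principal left ideals in a VNR ring are generated by idempotents. -/
lemma vnr_span_singleton (hA : ∀ a : A, ∃ x : A, a = a * x * a) (a : A) :
    ∃ e : A, e * e = e ∧ Submodule.span A {a} = Submodule.span A {e} := by
  obtain ⟨x, hx⟩ := hA a
  refine ⟨x * a, ?_, le_antisymm ?_ ?_⟩
  · calc x * a * (x * a) = x * (a * x * a) := by noncomm_ring
    _ = x * a := by rw [← hx]
  · rw [Submodule.span_le, Set.singleton_subset_iff, SetLike.mem_coe,
      Submodule.mem_span_singleton]
    exact ⟨a, by rw [smul_eq_mul, ← mul_assoc, ← hx]⟩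
  · rw [Submodule.span_le, Set.singleton_subset_iff, SetLike.mem_coe,
      Submodule.mem_span_singleton]
    exact ⟨x, by rw [smul_eq_mul]⟩

/-- Finitely generated left ideals in a VNR ring are generated by idempotents. -/
lemma vnr_fg_ideal (hA : ∀ a : A, ∃ x : A, a = a * x * a) (I : Submodule A A) (hI : I.FG) :
    ∃ e : A, e * e = e ∧ I = Submodule.span A {e} := by
  refine Submodule.fg_induction
    (motive := fun J _ => ∃ e : A, e * e = e ∧ J = Submodule.span A {e}) ?_ ?_ I hI
  · intro a
    exact vnr_span_singleton hA a
  · rintro J₁ J₂ _ _ ⟨e, he, rfl⟩ ⟨f, hf, rfl⟩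
    obtain ⟨f₂, hf₂, hf₂span⟩ := vnr_span_singleton hA (f - f * e)
    have hf₂e : f₂ * e = 0 := by
      obtain ⟨c, hc⟩ := Submodule.mem_span_singleton.mp
        (hf₂span ▸ Submodule.mem_span_singleton_self f₂)
      rw [← hc]
      simp [smul_eq_mul, sub_mul, mul_assoc, he, mul_sub]
    set g := e + f₂ - e * f₂ with hg
    have hge : e * g = e := by
      rw [hg, mul_sub, mul_add, ← mul_assoc, he]
      abel
    have hgf : f₂ * g = f₂ := by
      rw [hg, mul_sub, mul_add, hf₂e, ← mul_assoc, hf₂e, zero_mul]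
      simp [hf₂]
    have step1 : Submodule.span A ({f} : Set A) ⊔ Submodule.span A ({e} : Set A)
        = Submodule.span A ({f - f * e} : Set A) ⊔ Submodule.span A ({e} : Set A) := by
      refine le_antisymm (sup_le ?_ le_sup_right) (sup_le ?_ le_sup_right)
      · rw [Submodule.span_le, Set.singleton_subset_iff, SetLike.mem_coe]
        refine Submodule.mem_sup.mpr ⟨f - f * e, Submodule.mem_span_singleton_self _,
          f * e, Submodule.mem_span_singleton.mpr ⟨f, rfl⟩, by abel⟩
      · rw [Submodule.span_le, Set.singleton_subset_iff, SetLike.mem_coe]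
        refine Submodule.mem_sup.mpr ⟨f, Submodule.mem_span_singleton_self _,
          -(f * e), Submodule.neg_mem _ (Submodule.mem_span_singleton.mpr ⟨f, rfl⟩), by abel⟩
    have step2 : Submodule.span A ({e} : Set A) ⊔ Submodule.span A ({f₂} : Set A)
        = Submodule.span A ({g} : Set A) := by
      refine le_antisymm (sup_le ?_ ?_) ?_
      · rw [Submodule.span_le, Set.singleton_subset_iff, SetLike.mem_coe,
          Submodule.mem_span_singleton]
        exact ⟨e, by rw [smul_eq_mul, hge]⟩
      · rw [Submodule.span_le, Set.singleton_subset_iff, SetLike.mem_coe,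
          Submodule.mem_span_singleton]
        exact ⟨f₂, by rw [smul_eq_mul, hgf]⟩
      · rw [Submodule.span_le, Set.singleton_subset_iff, SetLike.mem_coe]
        refine Submodule.mem_sup.mpr ⟨e, Submodule.mem_span_singleton_self _,
          f₂ - e * f₂, ?_, by rw [hg]; abel⟩
        exact Submodule.sub_mem _ (Submodule.mem_span_singleton_self _)
          (Submodule.mem_span_singleton.mpr ⟨e, rfl⟩)
    have hgg : g * g = g := by
      calc g * g = (e + f₂ - e * f₂) * g := by rw [hg]
      _ = e * g + f₂ * g - e * (f₂ * g) := by rw [sub_mul, add_mul, mul_assoc]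
      _ = g := by rw [hge, hgf, hg]
    refine ⟨g, hgg, ?_⟩
    rw [sup_comm, step1, sup_comm, ← step2, hf₂span]

/-- Appending a zero coordinate, as a linear map. -/
def snocZero (A : Type) [Ring A] (n : ℕ) : (Fin n → A) →ₗ[A] (Fin (n + 1) → A) where
  toFun v := Fin.snoc v 0
  map_add' v w := by
    funext i
    refine Fin.lastCases ?_ (fun j => ?_) i <;> simp
  map_smul' c v := by
    funext i
    refine Fin.lastCases ?_ (fun j => ?_) i <;> simp

lemma res_snocZero (n : ℕ) (v : Fin n → A) :
    LinearMap.funLeft A A Fin.castSucc (snocZero A n v) = v := by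
  funext j
  simp [snocZero, LinearMap.funLeft_apply]

lemma snocZero_res (n : ℕ) (y : Fin (n + 1) → A) (hy : y (Fin.last n) = 0) :
    snocZero A n (LinearMap.funLeft A A Fin.castSucc y) = y := by
  funext i
  refine Fin.lastCases ?_ (fun j => ?_) i <;> simp [snocZero, LinearMap.funLeft_apply, hy]

/-- Over a VNR ring, every f.g. submodule of a finite free module admits a linear retraction. -/
lemma vnr_retract (hA : ∀ a : A, ∃ x : A, a = a * x * a) :
    ∀ (n : ℕ) (K : Submodule A (Fin n → A)), K.FG →
      ∃ p : (Fin n → A) →ₗ[A] (Fin n → A), (∀ x, p x ∈ K) ∧ (∀ x ∈ K, p x = x) := by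
  intro n
  induction n with
  | zero =>
    intro K _
    exact ⟨0, fun x => K.zero_mem, fun x _ => Subsingleton.elim _ _⟩
  | succ n IH =>
    intro K hK
    set π : (Fin (n + 1) → A) →ₗ[A] A := LinearMap.proj (Fin.last n) with hπdef
    obtain ⟨e, he, hIe⟩ := vnr_fg_ideal hA (K.map π) (hK.map π)
    have heI : e ∈ K.map π := hIe ▸ Submodule.mem_span_singleton_self e
    obtain ⟨u, huK, hu⟩ := heI
    set τ : (Fin (n + 1) → A) →ₗ[A] (Fin (n + 1) → A) :=
      (LinearMap.toSpanSingleton A _ u) ∘ₗ (LinearMap.toSpanSingleton A A e) ∘ₗ π with hτdef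
    have hτ_apply : ∀ x, τ x = (π x * e) • u := by
      intro x
      simp [hτdef, LinearMap.toSpanSingleton_apply, smul_eq_mul]
    have hτK : ∀ x, τ x ∈ K := by
      intro x
      rw [hτ_apply]
      exact K.smul_mem _ huK
    have hπτ : ∀ x, π (τ x) = π x * e := by
      intro x
      rw [hτ_apply, map_smul, hu, smul_eq_mul, mul_assoc, he]
    have hKe : ∀ x ∈ K, π x * e = π x := by
      intro x hx
      have : π x ∈ Submodule.span A {e} := hIe ▸ Submodule.mem_map_of_mem hx
      obtain ⟨c, hc⟩ := Submodule.mem_span_singleton.mp this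
      rw [← hc]
      simp [smul_eq_mul, mul_assoc, he]
    set θ : (Fin (n + 1) → A) →ₗ[A] (Fin (n + 1) → A) := LinearMap.id - τ with hθdef
    have hθ_apply : ∀ x, θ x = x - τ x := fun x => rfl
    have hθK : ∀ x ∈ K, θ x ∈ K := by
      intro x hx
      rw [hθ_apply]
      exact K.sub_mem hx (hτK x)
    have hπθ : ∀ x ∈ K, π (θ x) = 0 := by
      intro x hx
      rw [hθ_apply, map_sub, hπτ, hKe x hx, sub_self]
    set res : (Fin (n + 1) → A) →ₗ[A] (Fin n → A) := LinearMap.funLeft A A Fin.castSucc with hres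
    set J : Submodule A (Fin n → A) := K.map (res ∘ₗ θ) with hJdef
    obtain ⟨q', hq'mem, hq'fix⟩ := IH J (hK.map _)
    set q : (Fin (n + 1) → A) →ₗ[A] (Fin (n + 1) → A) :=
      (snocZero A n) ∘ₗ q' ∘ₗ res with hqdef
    have hextθ : ∀ x ∈ K, snocZero A n (res (θ x)) = θ x := by
      intro x hx
      exact snocZero_res n (θ x) (hπθ x hx)
    have hq_apply : ∀ x, q x = snocZero A n (q' (res x)) := fun x => rfl
    have hqJ : ∀ x, ∃ k ∈ K, q x = θ k := by
      intro x
      obtain ⟨k, hk, hkeq⟩ := hq'mem (res x)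
      refine ⟨k, hk, ?_⟩
      rw [hq_apply, ← hkeq]
      exact hextθ k hk
    have hqfix : ∀ x ∈ K, q (θ x) = θ x := by
      intro x hx
      have hmem : res (θ x) ∈ J := ⟨x, hx, rfl⟩
      rw [hq_apply, hq'fix _ hmem]
      exact hextθ x hx
    refine ⟨τ + q ∘ₗ θ, ?_, ?_⟩
    · intro x
      obtain ⟨k, hk, hqx⟩ := hqJ (θ x)
      have h2 : q (θ x) ∈ K := hqx ▸ hθK k hk
      simpa using K.add_mem (hτK x) h2
    · intro x hx
      have h1 : q (θ x) = θ x := hqfix x hx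
      show τ x + q (θ x) = x
      rw [h1, hθ_apply]
      abel

/-- Over a VNR ring, finitely presented modules are projective. -/
lemma vnr_projective (hA : ∀ a : A, ∃ x : A, a = a * x * a) (F : Type) [AddCommGroup F]
    [Module A F] [h : Module.FinitePresentation A F] : Module.Projective A F := by
  classical
  obtain ⟨s, hs, hker⟩ := h
  set l : (↥s →₀ A) →ₗ[A] F := Finsupp.linearCombination A ((↑) : s → F) with hl_def
  have hl : Function.Surjective l :=
    LinearMap.range_eq_top.mp
      (by rw [hl_def, Finsupp.range_linearCombination, Subtype.range_val, ← hs])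
  set E : (↥s →₀ A) ≃ₗ[A] (Fin (Fintype.card ↥s) → A) :=
    (Finsupp.linearEquivFunOnFinite A A ↥s).trans
      (LinearEquiv.funCongrLeft A A (Fintype.equivFin ↥s).symm) with hE
  set EL : (↥s →₀ A) →ₗ[A] (Fin (Fintype.card ↥s) → A) := E.toLinearMap with hEL
  obtain ⟨p, hpmem, hpfix⟩ := vnr_retract hA _ ((LinearMap.ker l).map EL) (hker.map EL)
  set p' : (↥s →₀ A) →ₗ[A] (↥s →₀ A) := (E.symm : _ →ₗ[A] _) ∘ₗ p ∘ₗ (E : _ →ₗ[A] _) with hp'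
  have hp'_apply : ∀ x, p' x = E.symm (p (EL x)) := fun _ => rfl
  have hp'mem : ∀ x, p' x ∈ LinearMap.ker l := by
    intro x
    obtain ⟨k, hk, hkeq⟩ := hpmem (EL x)
    have : p' x = k := by
      rw [hp'_apply, ← hkeq]
      exact E.symm_apply_apply k
    rw [this]; exact hk
  have hp'fix : ∀ x ∈ LinearMap.ker l, p' x = x := by
    intro x hx
    have hmem : EL x ∈ (LinearMap.ker l).map EL :=
      Submodule.mem_map_of_mem hx
    rw [hp'_apply, hpfix _ hmem]
    exact E.symm_apply_apply x
  have hcond : LinearMap.ker l ≤ LinearMap.ker (LinearMap.id - p') := by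
    intro x hx
    simp [LinearMap.mem_ker, hp'fix x hx]
  set h2 := l.quotKerEquivOfSurjective hl with hh2
  have hmk : ∀ x, h2 (Submodule.Quotient.mk x) = l x := by
    intro x
    rfl
  set i : F →ₗ[A] (↥s →₀ A) :=
    ((LinearMap.ker l).liftQ (LinearMap.id - p') hcond) ∘ₗ (h2.symm : F →ₗ[A] _) with hi
  refine Module.Projective.of_split i l ?_
  apply LinearMap.ext
  intro y
  obtain ⟨x, rfl⟩ := hl y
  have hsymm : h2.symm (l x) = Submodule.Quotient.mk x := by
    rw [LinearEquiv.symm_apply_eq, hmk]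
  have : i (l x) = x - p' x := by
    rw [hi, LinearMap.comp_apply, LinearEquiv.coe_coe, hsymm]
    rfl
  rw [LinearMap.comp_apply, this, LinearMap.id_apply, map_sub, sub_eq_self]
  exact hp'mem x

/-- Over a VNR ring every module is FP-injective. -/
lemma vnr_fpinj (hA : ∀ a : A, ∃ x : A, a = a * x * a) (M : Type) [AddCommGroup M]
    [Module A M] : FPInjective A M := by
  intro N _ _ L hfp f
  haveI := hfp
  haveI : Module.Projective A (N ⧸ L) := vnr_projective hA _
  obtain ⟨s, hs⟩ := Module.projective_lifting_property L.mkQ LinearMap.id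
    (Submodule.mkQ_surjective L)
  have hmem : ∀ x : N, ((LinearMap.id : N →ₗ[A] N) - s ∘ₗ L.mkQ) x ∈ L := by
    intro x
    have : L.mkQ (((LinearMap.id : N →ₗ[A] N) - s ∘ₗ L.mkQ) x) = 0 := by
      simp only [LinearMap.sub_apply, LinearMap.id_apply, LinearMap.comp_apply, map_sub]
      rw [← LinearMap.comp_apply L.mkQ s, hs]
      simp
    rwa [Submodule.mkQ_apply, Submodule.Quotient.mk_eq_zero] at this
  set r : N →ₗ[A] L := LinearMap.codRestrict L ((LinearMap.id : N →ₗ[A] N) - s ∘ₗ L.mkQ) hmem with hr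
  refine ⟨f ∘ₗ r, ?_⟩
  intro x
  have hx0 : L.mkQ (x : N) = 0 := by
    rw [Submodule.mkQ_apply, Submodule.Quotient.mk_eq_zero]
    exact x.2
  have hrx : r (x : N) = x := by
    apply Subtype.ext
    have hz : s (Submodule.Quotient.mk (x : N)) = 0 := by
      rw [← Submodule.mkQ_apply, hx0, map_zero]
    simp [hr, LinearMap.codRestrict, hz]
  rw [LinearMap.comp_apply, hrx]

/-- If every module is FP-injective, the ring is VNR. -/
lemma fpinj_vnr (h : ∀ (M : Type) [AddCommGroup M] [Module A M], FPInjective A M)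
    (a : A) : ∃ x : A, a = a * x * a := by
  set L : Submodule A A := Submodule.span A {a} with hL
  have hfp : Module.FinitePresentation A (A ⧸ L) :=
    Module.finitePresentation_of_surjective L.mkQ (Submodule.mkQ_surjective L)
      (by rw [Submodule.ker_mkQ]; exact Submodule.fg_span_singleton a)
  obtain ⟨g, hg⟩ := h L A L hfp LinearMap.id
  have ha : a ∈ L := Submodule.mem_span_singleton_self a
  obtain ⟨c, hc⟩ := Submodule.mem_span_singleton.mp
    (show ((g 1 : L) : A) ∈ Submodule.span A ({a} : Set A) from (g 1).2)
  refine ⟨c, ?_⟩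
  have h1 : (g a : A) = a := by
    simpa using congrArg Subtype.val (hg ⟨a, ha⟩)
  have h2 : g a = a • g 1 := by rw [← map_smul, smul_eq_mul, mul_one]
  calc a = (g a : A) := h1.symm
  _ = a • ((g 1 : L) : A) := by rw [h2]; rfl
  _ = a * (c * a) := by rw [← hc]; simp [smul_eq_mul]
  _ = a * c * a := by rw [mul_assoc]

/-- A ring `R` is von Neumann regular iff every right `R`-module
(i.e. left `Rᵐᵒᵖ`-module) is absolutely pure. -/
theorem stmt0 (R : Type) [Ring R] :
    (∀ a : R, ∃ x : R, a = a * x * a) ↔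
      (∀ (M : Type) [AddCommGroup M] [Module Rᵐᵒᵖ M], FPInjective Rᵐᵒᵖ M) := by
  constructor
  · intro hR M _ _
    apply vnr_fpinj
    intro a
    obtain ⟨x, hx⟩ := hR a.unop
    refine ⟨MulOpposite.op x, ?_⟩
    apply MulOpposite.unop_injective
    simp only [MulOpposite.unop_mul, MulOpposite.unop_op]
    rw [← mul_assoc]
    exact hx
  · intro h a
    obtain ⟨x, hx⟩ := fpinj_vnr (A := Rᵐᵒᵖ) h (MulOpposite.op a)
    refine ⟨x.unop, ?_⟩
    have h2 := congrArg MulOpposite.unop hx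
    simp only [MulOpposite.unop_mul, MulOpposite.unop_op] at h2
    rw [mul_assoc]
    exact h2
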